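/- arXiv:2604.10525 — 4 statements merged into one kernel-verified Lean document; each statement's English description precedes it below -/
import Mathlib

section
/- Let 0 < β·γ < 1 with β ≥ 0, γ > 0, λ > 0, and suppose λ ≤ (γ/β)^(Δ/2) for an integer Δ ≥ 2 (with the convention γ/β = +∞ if β = 0). Let D = Δ - 1 and f(x) = λ·((βx+1)/(x+γ))^D. Then the unique positive fixed point x̂ of f (i.e., x̂ = f(x̂)) satisfies x̂ ≤ √(γ/β). -/
/-- The unique positive fixed point of the tree recursion
`f(x) = λ ((βx+1)/(x+γ))^D` of an antiferromagnetic two-spin system with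
`λ ≤ (γ/β)^(Δ/2)` satisfies `x̂ ≤ √(γ/β)`.  The hypothesis is stated as
`λ² β^Δ ≤ γ^Δ` and the conclusion as `β x̂² ≤ γ`, which for `β > 0` are
equivalent to the original forms and for `β = 0` encode the convention
`γ/β = +∞`. -/
theorem stmt_0 (β γ lam x : ℝ) (Δ : ℕ)
    (hβ : 0 ≤ β) (hγ : 0 < γ) (hlam : 0 < lam)
    (hanti : β * γ < 1) (hΔ : 2 ≤ Δ)
    (hfield : lam ^ 2 * β ^ Δ ≤ γ ^ Δ)
    (hx : 0 < x)
    (hfix : x = lam * ((β * x + 1) / (x + γ)) ^ (Δ - 1)) :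
    β * x ^ 2 ≤ γ := by
  by_contra hc
  push_neg at hc
  -- hc : γ < β * x ^ 2
  have hβpos : 0 < β := by nlinarith [sq_nonneg x]
  set D := Δ - 1 with hD
  have hΔD : Δ = D + 1 := by omega
  have hden : 0 < x + γ := by linarith
  have hnum : 0 < β * x + 1 := by positivity
  -- fixed point equation without division
  rw [div_pow, ← mul_div_assoc, eq_div_iff (pow_ne_zero _ hden.ne')] at hfix
  -- hfix : x * (x+γ)^D = lam * (βx+1)^D
  have key : γ * (β * x + 1) ^ 2 < β * (x + γ) ^ 2 := by
    nlinarith [mul_pos (sub_pos.mpr hanti) (sub_pos.mpr hc)]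
  have hA : 0 < (x + γ) ^ 2 := by positivity
  have hB : 0 < (β * x + 1) ^ 2 := by positivity
  have h1 : (γ * (β * x + 1) ^ 2) ^ D ≤ (β * (x + γ) ^ 2) ^ D :=
    pow_le_pow_left₀ (by positivity) key.le D
  have h2 : γ * (γ * (β * x + 1) ^ 2) ^ D < (β * x ^ 2) * (β * (x + γ) ^ 2) ^ D :=
    mul_lt_mul hc h1 (by positivity) (by positivity)
  -- squared fixed point
  have hsq : x ^ 2 * ((x + γ) ^ 2) ^ D = lam ^ 2 * ((β * x + 1) ^ 2) ^ D := by
    have := congrArg (· ^ 2) hfix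
    simpa [mul_pow, ← pow_mul, mul_comm, Nat.mul_comm] using this
  have hL : (β * x ^ 2) * (β * (x + γ) ^ 2) ^ D
      = β ^ Δ * (lam ^ 2 * ((β * x + 1) ^ 2) ^ D) := by
    rw [← hsq, hΔD, mul_pow, pow_succ]
    ring
  have hR : γ * (γ * (β * x + 1) ^ 2) ^ D = γ ^ Δ * ((β * x + 1) ^ 2) ^ D := by
    rw [hΔD, mul_pow, pow_succ]
    ring
  rw [hL, hR] at h2
  have hBD : 0 < ((β * x + 1) ^ 2) ^ D := by positivity
  nlinarith [mul_le_mul_of_nonneg_right hfield hBD.le]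
end

section
/- Let μ be a distribution over {0,1}^m, θ ∈ (0,1]^m, and π = μ·D_{1→θ} the pushforward under the down operator. Define the correlation matrix Cor_ν(i,j) = ν(j occupied | i occupied) − ν(j occupied) when ν(i occupied) ∈ (0,1), and 0 otherwise. Then λ_max(Cor_μ) ≤ λ_max(Cor_π) · max_{i∈[m]} θᵢ^{-1}. -/
open Finset

/-- The marginal of a distribution `ν` on `{0,1}^m` at coordinate `i`. -/
noncomputable def margin {m : ℕ} (ν : (Fin m → Bool) → ℝ) (i : Fin m) : ℝ :=
  ∑ S : Fin m → Bool, if S i then ν S else 0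

/-- The correlation matrix of a distribution `ν` on `{0,1}^m`:
`Cor_ν(i,j) = ν(j occupied | i occupied) − ν(j occupied)` when
`ν(i occupied) ∈ (0,1)`, and `0` otherwise. -/
noncomputable def corMatrix {m : ℕ} (ν : (Fin m → Bool) → ℝ) :
    Matrix (Fin m) (Fin m) ℝ :=
  Matrix.of fun i j =>
    if 0 < margin ν i ∧ margin ν i < 1 then
      (∑ S : Fin m → Bool, if S i ∧ S j then ν S else 0) / margin ν i -
        margin ν j
    else 0

/-- Transition probability of the down operator `D_{1→θ}`. -/
noncomputable def downKernel {m : ℕ} (θ : Fin m → ℝ) (S T : Fin m → Bool) : ℝ :=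
  ∏ i : Fin m,
    if S i then (if T i then θ i else 1 - θ i) else (if T i then 0 else 1)

/-- The pushforward `μ D_{1→θ}` of `μ` under the down operator. -/
noncomputable def downDist {m : ℕ} (μ : (Fin m → Bool) → ℝ) (θ : Fin m → ℝ) :
    (Fin m → Bool) → ℝ :=
  fun T => ∑ S : Fin m → Bool, μ S * downKernel θ S T

namespace Stmt12Aux

variable {m : ℕ}

/-- The joint probability that `i` and `j` are both occupied. -/
noncomputable def joint (ν : (Fin m → Bool) → ℝ) (i j : Fin m) : ℝ :=
  ∑ S : Fin m → Bool, if S i ∧ S j then ν S else 0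

/-- The covariance. -/
noncomputable def cov (ν : (Fin m → Bool) → ℝ) (i j : Fin m) : ℝ :=
  joint ν i j - margin ν i * margin ν j

lemma sum_prod_bool (f : Fin m → Bool → ℝ) :
    ∑ T : Fin m → Bool, ∏ k, f k (T k) = ∏ k, (f k true + f k false) := by
  have := Finset.prod_univ_sum (fun _ : Fin m => (Finset.univ : Finset Bool)) f
  rw [Fintype.piFinset_univ] at this
  rw [← this]
  apply Finset.prod_congr rfl
  intro k _
  simp [Fintype.univ_bool]

lemma downKernel_nonneg (θ : Fin m → ℝ) (hθ : ∀ i, 0 < θ i ∧ θ i ≤ 1) (S T : Fin m → Bool) :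
    0 ≤ downKernel θ S T := by
  apply Finset.prod_nonneg
  intro k _
  rcases hθ k with ⟨h1, h2⟩
  by_cases hS : S k <;> by_cases hT : T k <;> simp [hS, hT] <;> linarith

lemma sum_downKernel (θ : Fin m → ℝ) (S : Fin m → Bool) :
    ∑ T : Fin m → Bool, downKernel θ S T = 1 := by
  refine Eq.trans (sum_prod_bool fun k b =>
    if S k then (if b then θ k else 1 - θ k) else (if b then 0 else 1)) ?_
  apply Finset.prod_eq_one
  intro k _
  by_cases hS : S k <;> simp [hS]

lemma sum_downKernel_one (θ : Fin m → ℝ) (S : Fin m → Bool) (i : Fin m) :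
    ∑ T : Fin m → Bool, (if T i then downKernel θ S T else 0)
      = if S i then θ i else 0 := by
  classical
  set g : Fin m → Bool → ℝ := fun k b =>
    (if k = i then (if b then (1:ℝ) else 0) else 1) *
      (if S k then (if b then θ k else 1 - θ k) else (if b then 0 else 1)) with hg
  have h1 : ∀ T : Fin m → Bool,
      (if T i then downKernel θ S T else 0) = ∏ k, g k (T k) := by
    intro T
    by_cases hTi : T i
    · rw [if_pos hTi]
      unfold downKernel
      apply Finset.prod_congr rfl
      intro k _
      by_cases hk : k = i
      · subst hk; simp [hg, hTi]
      · simp [hg, hk]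
    · rw [if_neg hTi]
      symm
      apply Finset.prod_eq_zero (Finset.mem_univ i)
      simp [hg, hTi]
  rw [Finset.sum_congr rfl fun T _ => h1 T, sum_prod_bool]
  rw [Fintype.prod_eq_single i]
  · by_cases hS : S i <;> simp [hg, hS]
  · intro k hk
    by_cases hS : S k <;> simp [hg, hk, hS]

lemma sum_downKernel_two (θ : Fin m → ℝ) (S : Fin m → Bool) {i j : Fin m} (hij : i ≠ j) :
    ∑ T : Fin m → Bool, (if T i ∧ T j then downKernel θ S T else 0)
      = (if S i then θ i else 0) * (if S j then θ j else 0) := by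
  classical
  set g : Fin m → Bool → ℝ := fun k b =>
    (if k = i then (if b then (1:ℝ) else 0) else 1) *
    ((if k = j then (if b then (1:ℝ) else 0) else 1) *
      (if S k then (if b then θ k else 1 - θ k) else (if b then 0 else 1))) with hg
  have hij' : ¬ i = j := hij
  have hji' : ¬ j = i := fun h => hij h.symm
  have h1 : ∀ T : Fin m → Bool,
      (if T i ∧ T j then downKernel θ S T else 0) = ∏ k, g k (T k) := by
    intro T
    by_cases hTi : T i
    · by_cases hTj : T j
      · rw [if_pos ⟨hTi, hTj⟩]
        unfold downKernel
        apply Finset.prod_congr rfl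
        intro k _
        by_cases hki : k = i
        · subst hki; simp [hg, hTi, hij']
        · by_cases hkj : k = j
          · subst hkj; simp [hg, hTj, hki]
          · simp [hg, hki, hkj]
      · rw [if_neg (by tauto)]
        symm
        apply Finset.prod_eq_zero (Finset.mem_univ j)
        simp [hg, hTj, hji']
    · rw [if_neg (by tauto)]
      symm
      apply Finset.prod_eq_zero (Finset.mem_univ i)
      simp [hg, hTi]
  rw [Finset.sum_congr rfl fun T _ => h1 T, sum_prod_bool]
  rw [Fintype.prod_eq_mul i j hij]
  · by_cases hSi : S i <;> by_cases hSj : S j <;>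
      simp [hg, hSi, hSj, hij', hji']
  · rintro k ⟨hki, hkj⟩
    by_cases hS : S k <;> simp [hg, hki, hkj, hS]

lemma joint_symm (ν : (Fin m → Bool) → ℝ) (i j : Fin m) : joint ν i j = joint ν j i := by
  unfold joint
  apply Finset.sum_congr rfl
  intro S _
  by_cases h1 : S i <;> by_cases h2 : S j <;> simp [h1, h2]

lemma joint_diag (ν : (Fin m → Bool) → ℝ) (i : Fin m) : joint ν i i = margin ν i := by
  unfold joint margin
  apply Finset.sum_congr rfl
  intro S _
  by_cases h1 : S i <;> simp [h1]

lemma margin_nonneg {ν : (Fin m → Bool) → ℝ} (hν : ∀ S, 0 ≤ ν S) (i : Fin m) :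
    0 ≤ margin ν i := by
  apply Finset.sum_nonneg
  intro S _
  by_cases h : S i <;> simp [h, hν S]

lemma joint_nonneg {ν : (Fin m → Bool) → ℝ} (hν : ∀ S, 0 ≤ ν S) (i j : Fin m) :
    0 ≤ joint ν i j := by
  apply Finset.sum_nonneg
  intro S _
  by_cases h : S i ∧ S j <;> simp [h, hν S]

lemma joint_le_margin_right {ν : (Fin m → Bool) → ℝ} (hν : ∀ S, 0 ≤ ν S) (i j : Fin m) :
    joint ν i j ≤ margin ν j := by
  apply Finset.sum_le_sum
  intro S _
  by_cases h1 : S i <;> by_cases h2 : S j <;> simp [h1, h2, hν S]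

lemma margin_le_one {ν : (Fin m → Bool) → ℝ} (hν : ∀ S, 0 ≤ ν S)
    (hsum : ∑ S : Fin m → Bool, ν S = 1) (i : Fin m) : margin ν i ≤ 1 := by
  rw [← hsum]
  apply Finset.sum_le_sum
  intro S _
  by_cases h : S i <;> simp [h, hν S]

lemma joint_eq_margin_of_margin_one {ν : (Fin m → Bool) → ℝ} (hν : ∀ S, 0 ≤ ν S)
    (hsum : ∑ S : Fin m → Bool, ν S = 1) {j : Fin m} (hj : margin ν j = 1) (i : Fin m) :
    joint ν i j = margin ν i := by
  have hz : ∀ S : Fin m → Bool, ¬ S j → ν S = 0 := by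
    have h0 : ∑ S : Fin m → Bool, (ν S - if S j then ν S else 0) = 0 := by
      rw [Finset.sum_sub_distrib, hsum]
      have : ∑ S : Fin m → Bool, (if S j then ν S else 0) = margin ν j := rfl
      rw [this, hj]; ring
    intro S hS
    have hnn : ∀ T ∈ (Finset.univ : Finset (Fin m → Bool)),
        0 ≤ ν T - if T j then ν T else 0 := by
      intro T _
      by_cases h : T j <;> simp [h, hν T]
    have := (Finset.sum_eq_zero_iff_of_nonneg hnn).mp h0 S (Finset.mem_univ S)
    simpa [hS] using this
  unfold joint margin
  apply Finset.sum_congr rfl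
  intro S _
  by_cases h2 : S j
  · simp [h2]
  · simp [h2, hz S h2]

lemma downDist_nonneg (μ : (Fin m → Bool) → ℝ) (θ : Fin m → ℝ)
    (hμ0 : ∀ S, 0 ≤ μ S) (hθ : ∀ i, 0 < θ i ∧ θ i ≤ 1)
    (T : Fin m → Bool) : 0 ≤ downDist μ θ T :=
  Finset.sum_nonneg fun S _ => mul_nonneg (hμ0 S) (downKernel_nonneg θ hθ S T)

lemma sum_downDist (μ : (Fin m → Bool) → ℝ) (θ : Fin m → ℝ)
    (hμ1 : ∑ S : Fin m → Bool, μ S = 1) :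
    ∑ T : Fin m → Bool, downDist μ θ T = 1 := by
  unfold downDist
  rw [Finset.sum_comm]
  rw [← hμ1]
  apply Finset.sum_congr rfl
  intro S _
  rw [← Finset.mul_sum, sum_downKernel, mul_one]

lemma margin_downDist (μ : (Fin m → Bool) → ℝ) (θ : Fin m → ℝ) (i : Fin m) :
    margin (downDist μ θ) i = θ i * margin μ i := by
  unfold margin downDist
  have h1 : ∀ T : Fin m → Bool,
      (if T i then ∑ S : Fin m → Bool, μ S * downKernel θ S T else 0)
        = ∑ S : Fin m → Bool, μ S * (if T i then downKernel θ S T else 0) := by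
    intro T
    by_cases h : T i <;> simp [h]
  rw [Finset.sum_congr rfl fun T _ => h1 T, Finset.sum_comm]
  rw [Finset.mul_sum]
  apply Finset.sum_congr rfl
  intro S _
  rw [← Finset.mul_sum, sum_downKernel_one]
  by_cases h : S i <;> simp [h] <;> ring

lemma joint_downDist (μ : (Fin m → Bool) → ℝ) (θ : Fin m → ℝ) {i j : Fin m} (hij : i ≠ j) :
    joint (downDist μ θ) i j = θ i * θ j * joint μ i j := by
  unfold joint downDist
  have h1 : ∀ T : Fin m → Bool,
      (if T i ∧ T j then ∑ S : Fin m → Bool, μ S * downKernel θ S T else 0)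
        = ∑ S : Fin m → Bool, μ S * (if T i ∧ T j then downKernel θ S T else 0) := by
    intro T
    by_cases h : T i ∧ T j <;> simp [h]
  rw [Finset.sum_congr rfl fun T _ => h1 T, Finset.sum_comm]
  rw [Finset.mul_sum]
  apply Finset.sum_congr rfl
  intro S _
  rw [← Finset.mul_sum, sum_downKernel_two θ S hij]
  by_cases h1 : S i <;> by_cases h2 : S j <;> simp [h1, h2] <;> ring

lemma corMatrix_apply (ν : (Fin m → Bool) → ℝ) (i j : Fin m) :
    corMatrix ν i j =
      if 0 < margin ν i ∧ margin ν i < 1 then joint ν i j / margin ν i - margin ν j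
      else 0 := rfl

lemma cov_symm (ν : (Fin m → Bool) → ℝ) (i j : Fin m) : cov ν i j = cov ν j i := by
  unfold cov; rw [joint_symm]; ring

lemma corMatrix_row_zero {ν : (Fin m → Bool) → ℝ} {i : Fin m}
    (h : ¬ (0 < margin ν i ∧ margin ν i < 1)) (j : Fin m) : corMatrix ν i j = 0 := by
  rw [corMatrix_apply, if_neg h]

lemma margin_mul_corMatrix {ν : (Fin m → Bool) → ℝ} {i : Fin m}
    (h : 0 < margin ν i ∧ margin ν i < 1) (j : Fin m) :
    margin ν i * corMatrix ν i j = cov ν i j := by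
  rw [corMatrix_apply, if_pos h]
  unfold cov
  have h0 : margin ν i ≠ 0 := ne_of_gt h.1
  rw [mul_sub, mul_comm (margin ν i) (joint ν i j / margin ν i), div_mul_cancel₀ _ h0]

lemma corMatrix_col_zero {ν : (Fin m → Bool) → ℝ} (hν : ∀ S, 0 ≤ ν S)
    (hsum : ∑ S : Fin m → Bool, ν S = 1) {j : Fin m}
    (h : ¬ (0 < margin ν j ∧ margin ν j < 1)) (i : Fin m) : corMatrix ν i j = 0 := by
  rw [corMatrix_apply]
  split
  · rename_i hi
    rcases not_and_or.mp h with h1 | h1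
    · have hj0 : margin ν j = 0 := le_antisymm (not_lt.mp h1) (margin_nonneg hν j)
      have hjoint : joint ν i j = 0 :=
        le_antisymm (hj0 ▸ joint_le_margin_right hν i j) (joint_nonneg hν i j)
      rw [hjoint, hj0, zero_div, sub_zero]
    · have hj1 : margin ν j = 1 := le_antisymm (margin_le_one hν hsum j) (not_lt.mp h1)
      rw [joint_eq_margin_of_margin_one hν hsum hj1 i, div_self (ne_of_gt hi.1), hj1, sub_self]
  · rfl

lemma corMatrix_diag_nonneg {ν : (Fin m → Bool) → ℝ} (i : Fin m) : 0 ≤ corMatrix ν i i := by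
  rw [corMatrix_apply]
  split
  · rename_i hi
    rw [joint_diag, div_self (ne_of_gt hi.1)]
    linarith [hi.2]
  · exact le_refl 0

lemma cov_downDist (μ : (Fin m → Bool) → ℝ) (θ : Fin m → ℝ) (i j : Fin m) :
    cov (downDist μ θ) i j = θ i * θ j * cov μ i j +
      (if i = j then θ i * margin μ i * (1 - θ i) else 0) := by
  by_cases h : i = j
  · subst h
    unfold cov
    rw [joint_diag, joint_diag, margin_downDist, if_pos rfl]
    ring
  · unfold cov
    rw [joint_downDist μ θ h, margin_downDist, margin_downDist, if_neg h]
    ring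

end Stmt12Aux

set_option maxHeartbeats 1600000 in
open Stmt12Aux in
/-- Spectral independence under the down operator:
`λ_max(Cor_μ) ≤ λ_max(Cor_π) · max_i θᵢ⁻¹` where `π = μ D_{1→θ}`.
Formally, every real eigenvalue `a` of `Cor_μ` is bounded by
`b · sup_i θᵢ⁻¹` for some real eigenvalue `b` of `Cor_π`. -/
theorem stmt_12 (m : ℕ) (hm : 0 < m) (μ : (Fin m → Bool) → ℝ) (θ : Fin m → ℝ)
    (hμ0 : ∀ S, 0 ≤ μ S) (hμ1 : ∑ S : Fin m → Bool, μ S = 1)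
    (hθ : ∀ i, 0 < θ i ∧ θ i ≤ 1) :
    ∀ a : ℝ,
      Module.End.HasEigenvalue (Matrix.toLin' (corMatrix μ)) a →
      ∃ b : ℝ,
        Module.End.HasEigenvalue (Matrix.toLin' (corMatrix (downDist μ θ))) b ∧
          a ≤ b * ⨆ i : Fin m, (θ i)⁻¹ := by
  classical
  intro a ha
  set π : (Fin m → Bool) → ℝ := downDist μ θ with hπdef
  have hπ0 : ∀ T, 0 ≤ π T := downDist_nonneg μ θ hμ0 hθ
  have hπ1 : ∑ T : Fin m → Bool, π T = 1 := sum_downDist μ θ hμ1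
  set i0 : Fin m := ⟨0, hm⟩ with hi0
  haveI : Nonempty (Fin m) := ⟨i0⟩
  -- the scaling function
  set sf : Fin m → ℝ := fun i =>
    if 0 < margin π i ∧ margin π i < 1 then Real.sqrt (margin π i) else 1 with hsf
  have hs_pos : ∀ i, 0 < sf i := by
    intro i
    rw [hsf]
    dsimp only
    split
    · rename_i h; exact Real.sqrt_pos.mpr h.1
    · exact one_pos
  have hs_sq : ∀ i, (0 < margin π i ∧ margin π i < 1) → sf i ^ 2 = margin π i := by
    intro i hi
    rw [hsf]
    dsimp only
    rw [if_pos hi, Real.sq_sqrt (le_of_lt hi.1)]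
  -- the symmetrized correlation matrix of π
  set Smat : Matrix (Fin m) (Fin m) ℝ :=
    Matrix.of (fun i j => sf i * corMatrix π i j / sf j) with hSmatdef
  have hSapp : ∀ i j, Smat i j = sf i * corMatrix π i j / sf j := fun i j => rfl
  have hSsymm : ∀ i j, Smat i j = Smat j i := by
    intro i j
    by_cases hi : 0 < margin π i ∧ margin π i < 1
    · by_cases hj : 0 < margin π j ∧ margin π j < 1
      · rw [hSapp, hSapp, div_eq_div_iff (ne_of_gt (hs_pos j)) (ne_of_gt (hs_pos i))]
        have h1 : margin π i * corMatrix π i j = margin π j * corMatrix π j i := by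
          rw [margin_mul_corMatrix hi, margin_mul_corMatrix hj, cov_symm]
        have h2 := hs_sq i hi
        have h3 := hs_sq j hj
        linear_combination corMatrix π i j * h2 - corMatrix π j i * h3 + h1
      · rw [hSapp, hSapp, corMatrix_col_zero hπ0 hπ1 hj i, corMatrix_row_zero hj i]
        simp
    · rw [hSapp, hSapp, corMatrix_row_zero hi j, corMatrix_col_zero hπ0 hπ1 hi j]
      simp
  have hherm : Smat.IsHermitian := by
    apply Matrix.ext
    intro i j
    rw [Matrix.conjTranspose_apply, star_trivial]
    exact hSsymm j i
  haveI : Nontrivial (EuclideanSpace ℝ (Fin m)) := by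
    refine ⟨(WithLp.equiv 2 (Fin m → ℝ)).symm (Pi.single i0 1), 0, fun h => ?_⟩
    have h2 : (Pi.single i0 (1:ℝ) : Fin m → ℝ) = 0 := by
      have := congrArg (WithLp.equiv 2 (Fin m → ℝ)) h
      rw [Equiv.apply_symm_apply] at this; exact this
    have h3 := congrFun h2 i0
    simp at h3
  have hsymT : (Matrix.toEuclideanLin Smat).IsSymmetric :=
    Matrix.isHermitian_iff_isSymmetric.mp hherm
  set b : ℝ := ⨆ x : { x : EuclideanSpace ℝ (Fin m) // x ≠ 0 },
      RCLike.re (inner ℝ ((Matrix.toEuclideanLin Smat) (x : EuclideanSpace ℝ (Fin m)))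
        (x : EuclideanSpace ℝ (Fin m)) : ℝ) / ‖(x : EuclideanSpace ℝ (Fin m))‖ ^ 2 with hbdef
  have hbeig0 := hsymT.hasEigenvalue_iSup_of_finiteDimensional
  have hbeig : Module.End.HasEigenvalue (Matrix.toEuclideanLin Smat) b := by
    simpa [hbdef] using hbeig0
  -- boundedness of the Rayleigh quotient
  have hbdd : BddAbove (Set.range fun x : { x : EuclideanSpace ℝ (Fin m) // x ≠ 0 } =>
      RCLike.re (inner ℝ ((Matrix.toEuclideanLin Smat) (x : EuclideanSpace ℝ (Fin m)))
        (x : EuclideanSpace ℝ (Fin m)) : ℝ) / ‖(x : EuclideanSpace ℝ (Fin m))‖ ^ 2) := by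
    set T' := LinearMap.toContinuousLinearMap (Matrix.toEuclideanLin Smat) with hT'
    refine ⟨‖T'‖, ?_⟩
    rintro y ⟨x, rfl⟩
    dsimp only
    have hx2 : (0:ℝ) < ‖(x : EuclideanSpace ℝ (Fin m))‖ ^ 2 :=
      pow_pos (norm_pos_iff.mpr x.2) 2
    rw [div_le_iff₀ hx2]
    have h1 : (inner ℝ ((Matrix.toEuclideanLin Smat) (x : EuclideanSpace ℝ (Fin m)))
        (x : EuclideanSpace ℝ (Fin m)) : ℝ)
        ≤ ‖(Matrix.toEuclideanLin Smat) (x : EuclideanSpace ℝ (Fin m))‖ *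
          ‖(x : EuclideanSpace ℝ (Fin m))‖ := real_inner_le_norm _ _
    have h2 : ‖(Matrix.toEuclideanLin Smat) (x : EuclideanSpace ℝ (Fin m))‖
        ≤ ‖T'‖ * ‖(x : EuclideanSpace ℝ (Fin m))‖ := by
      have := T'.le_opNorm (x : EuclideanSpace ℝ (Fin m))
      simpa [hT'] using this
    have h3 : ‖(x : EuclideanSpace ℝ (Fin m))‖ ≥ 0 := norm_nonneg _
    calc RCLike.re (inner ℝ ((Matrix.toEuclideanLin Smat) (x : EuclideanSpace ℝ (Fin m)))
          (x : EuclideanSpace ℝ (Fin m)) : ℝ)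
        = (inner ℝ ((Matrix.toEuclideanLin Smat) (x : EuclideanSpace ℝ (Fin m)))
          (x : EuclideanSpace ℝ (Fin m)) : ℝ) := rfl
      _ ≤ ‖(Matrix.toEuclideanLin Smat) (x : EuclideanSpace ℝ (Fin m))‖ *
          ‖(x : EuclideanSpace ℝ (Fin m))‖ := h1
      _ ≤ (‖T'‖ * ‖(x : EuclideanSpace ℝ (Fin m))‖) * ‖(x : EuclideanSpace ℝ (Fin m))‖ :=
          mul_le_mul_of_nonneg_right h2 h3
      _ = ‖T'‖ * ‖(x : EuclideanSpace ℝ (Fin m))‖ ^ 2 := by ring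
  -- the Rayleigh lower bound on b, in coordinates
  have hray : ∀ u : Fin m → ℝ, u ≠ 0 →
      (∑ i, ∑ j, Smat i j * u j * u i) / (∑ i, u i ^ 2) ≤ b := by
    intro u hu
    set x : EuclideanSpace ℝ (Fin m) := (WithLp.equiv 2 (Fin m → ℝ)).symm u with hx
    have hx_ne : x ≠ 0 := by
      intro h
      apply hu
      have := congrArg (WithLp.equiv 2 (Fin m → ℝ)) h
      rw [Equiv.apply_symm_apply] at this; exact this
    have h1 : (inner ℝ ((Matrix.toEuclideanLin Smat) x) x : ℝ)
        = ∑ i, ∑ j, Smat i j * u j * u i := by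
      rw [hx, WithLp.equiv_symm_apply, Matrix.toEuclideanLin_apply_piLp_toLp, PiLp.inner_apply]
      apply Finset.sum_congr rfl
      intro i _
      rw [PiLp.toLp_apply, PiLp.toLp_apply]
      rw [RCLike.inner_apply', conj_trivial]
      show (Smat.mulVec u i) * u i = _
      simp only [Matrix.mulVec, dotProduct]
      rw [Finset.sum_mul]
    have h2 : ‖x‖ ^ 2 = ∑ i, u i ^ 2 := by
      rw [← real_inner_self_eq_norm_sq, hx, PiLp.inner_apply]
      apply Finset.sum_congr rfl
      intro i _
      rw [WithLp.equiv_symm_apply, PiLp.toLp_apply]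
      show u i * u i = u i ^ 2
      ring
    have h3 := le_ciSup hbdd (⟨x, hx_ne⟩ : { x : EuclideanSpace ℝ (Fin m) // x ≠ 0 })
    rw [hbdef]
    calc (∑ i, ∑ j, Smat i j * u j * u i) / (∑ i, u i ^ 2)
        = RCLike.re (inner ℝ ((Matrix.toEuclideanLin Smat) x) x : ℝ) / ‖x‖ ^ 2 := by
          rw [h1, h2]; rfl
      _ ≤ _ := h3
  -- transfer the eigenvalue b to corMatrix π
  obtain ⟨xe, hxe⟩ := hbeig.exists_hasEigenvector
  set u : Fin m → ℝ := WithLp.equiv 2 (Fin m → ℝ) xe with hu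
  have hu_ne : u ≠ 0 := by
    intro h
    apply hxe.2
    have := congrArg (WithLp.equiv 2 (Fin m → ℝ)).symm h
    rw [Equiv.symm_apply_apply] at this; exact this
  have hmv : Smat.mulVec u = b • u := by
    have h1 := hxe.apply_eq_smul
    have h2 := congrArg (WithLp.equiv 2 (Fin m → ℝ)) h1
    exact h2
  set v : Fin m → ℝ := fun i => u i / sf i with hv
  have hv_ne : v ≠ 0 := by
    intro h
    apply hu_ne
    funext i
    have := congrFun h i
    rw [hv] at this
    simp only at this
    have hsne : sf i ≠ 0 := ne_of_gt (hs_pos i)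
    field_simp at this
    simpa using this
  have hmv2 : (corMatrix π).mulVec v = b • v := by
    funext i
    have hsne : sf i ≠ 0 := ne_of_gt (hs_pos i)
    have h1 : Smat.mulVec u i = b * u i := by rw [hmv]; rfl
    have h2 : Smat.mulVec u i = sf i * ((corMatrix π).mulVec v i) := by
      simp only [Matrix.mulVec, dotProduct, Finset.mul_sum]
      apply Finset.sum_congr rfl
      intro j _
      rw [hSapp]
      have hsnej : sf j ≠ 0 := ne_of_gt (hs_pos j)
      rw [hv]
      simp only
      field_simp
    show (corMatrix π).mulVec v i = b * v i
    apply mul_left_cancel₀ hsne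
    rw [← h2, h1, hv]
    simp only
    field_simp
  have hbeig' : Module.End.HasEigenvalue (Matrix.toLin' (corMatrix π)) b := by
    apply Module.End.hasEigenvalue_of_hasEigenvector (x := v)
    refine ⟨Module.End.mem_eigenspace_iff.mpr ?_, hv_ne⟩
    rw [Matrix.toLin'_apply]
    exact hmv2
  -- the sup of θ⁻¹
  set M : ℝ := ⨆ i : Fin m, (θ i)⁻¹ with hM
  have hM_ge : ∀ i, (θ i)⁻¹ ≤ M := by
    intro i
    rw [hM]
    exact le_ciSup (Set.Finite.bddAbove (Set.finite_range fun k => (θ k)⁻¹)) i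
  have hM_pos : 0 < M := lt_of_lt_of_le (inv_pos.mpr (hθ i0).1) (hM_ge i0)
  -- b is nonnegative
  have hb0 : 0 ≤ b := by
    have hsingle_ne : (Pi.single i0 (1:ℝ) : Fin m → ℝ) ≠ 0 := by
      intro h
      have := congrFun h i0
      simp at this
    have hr := hray (Pi.single i0 1 : Fin m → ℝ) hsingle_ne
    have hnum : (∑ i, ∑ j, Smat i j * (Pi.single i0 (1:ℝ) : Fin m → ℝ) j *
        (Pi.single i0 (1:ℝ) : Fin m → ℝ) i) = Smat i0 i0 := by
      simp [Pi.single_apply]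
    have hden : (∑ i, ((Pi.single i0 (1:ℝ) : Fin m → ℝ) i) ^ 2) = 1 := by
      simp [Pi.single_apply]
    rw [hnum, hden, div_one] at hr
    have hS00 : 0 ≤ Smat i0 i0 := by
      rw [hSapp]
      apply div_nonneg _ (le_of_lt (hs_pos i0))
      exact mul_nonneg (le_of_lt (hs_pos i0)) (corMatrix_diag_nonneg i0)
    linarith
  refine ⟨b, hbeig', ?_⟩
  rcases le_or_gt a 0 with ha_le | ha_pos
  · calc a ≤ 0 := ha_le
      _ ≤ b * M := mul_nonneg hb0 (le_of_lt hM_pos)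
  -- the main case: a > 0
  obtain ⟨ve, hve⟩ := ha.exists_hasEigenvector
  have hve1 : (corMatrix μ).mulVec ve = a • ve := by
    rw [← Matrix.toLin'_apply]
    exact hve.apply_eq_smul
  have hve_ne : ve ≠ 0 := hve.2
  -- support of ve is contained in the good indices of μ
  have hsupp : ∀ i, ¬ (0 < margin μ i ∧ margin μ i < 1) → ve i = 0 := by
    intro i hi
    have h1 : (corMatrix μ).mulVec ve i = a * ve i := by rw [hve1]; rfl
    have h2 : (corMatrix μ).mulVec ve i = 0 := by
      simp only [Matrix.mulVec, dotProduct]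
      apply Finset.sum_eq_zero
      intro j _
      rw [corMatrix_row_zero hi j, zero_mul]
    rw [h2] at h1
    exact (mul_eq_zero.mp h1.symm).resolve_left (ne_of_gt ha_pos)
  -- good indices for μ are good for π
  have hgood_pi : ∀ i, (0 < margin μ i ∧ margin μ i < 1) →
      (0 < margin π i ∧ margin π i < 1) := by
    intro i hi
    rw [hπdef, margin_downDist]
    constructor
    · exact mul_pos (hθ i).1 hi.1
    · calc θ i * margin μ i ≤ 1 * margin μ i :=
          mul_le_mul_of_nonneg_right (hθ i).2 (le_of_lt hi.1)
        _ = margin μ i := one_mul _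
        _ < 1 := hi.2
  obtain ⟨i1, hi1⟩ : ∃ i, ve i ≠ 0 := Function.ne_iff.mp hve_ne
  have hgood1 : 0 < margin μ i1 ∧ margin μ i1 < 1 := by
    by_contra h
    exact hi1 (hsupp i1 h)
  set N : ℝ := ∑ i, margin μ i * ve i ^ 2 with hN
  have hN_pos : 0 < N := by
    rw [hN]
    apply Finset.sum_pos' (fun i _ => mul_nonneg (margin_nonneg hμ0 i) (sq_nonneg _))
    refine ⟨i1, Finset.mem_univ i1, ?_⟩
    have : 0 < ve i1 ^ 2 := by positivity
    exact mul_pos hgood1.1 this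
  -- a * N equals the covariance quadratic form of μ at ve
  have haN : a * N = ∑ i, ∑ j, cov μ i j * (ve i * ve j) := by
    have e0 : a * N = ∑ i, margin μ i * ((corMatrix μ).mulVec ve i) * ve i := by
      rw [hve1, hN, Finset.mul_sum]
      apply Finset.sum_congr rfl
      intro i _
      have : (a • ve) i = a * ve i := rfl
      rw [this]
      ring
    rw [e0]
    apply Finset.sum_congr rfl
    intro i _
    simp only [Matrix.mulVec, dotProduct]
    rw [Finset.mul_sum, Finset.sum_mul]
    apply Finset.sum_congr rfl
    intro j _
    by_cases hvi : ve i = 0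
    · simp [hvi]
    · have hgi : 0 < margin μ i ∧ margin μ i < 1 := by
        by_contra h
        exact hvi (hsupp i h)
      rw [← margin_mul_corMatrix hgi j]
      ring
  -- the rescaled vectors
  set w : Fin m → ℝ := fun i => ve i / θ i with hw
  have hθw : ∀ i, θ i * w i = ve i := by
    intro i
    rw [hw]
    simp only
    rw [mul_comm]
    exact div_mul_cancel₀ (ve i) (ne_of_gt (hθ i).1)
  set u0 : Fin m → ℝ := fun i => sf i * w i with hu0
  -- pointwise covariance comparison
  have covcomp : ∀ i j, cov μ i j * (ve i * ve j) ≤ cov π i j * (w i * w j) := by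
    intro i j
    rw [hπdef, cov_downDist]
    by_cases h : i = j
    · subst h
      rw [if_pos rfl]
      have h1 : θ i * θ i * cov μ i i * (w i * w i) = cov μ i i * (ve i * ve i) := by
        rw [← hθw i]
        ring
      have h2 : 0 ≤ θ i * margin μ i * (1 - θ i) * (w i * w i) := by
        apply mul_nonneg
        · apply mul_nonneg
          · exact mul_nonneg (le_of_lt (hθ i).1) (margin_nonneg hμ0 i)
          · linarith [(hθ i).2]
        · exact mul_self_nonneg _
      nlinarith [h1, h2]
    · rw [if_neg h, add_zero]
      apply le_of_eq
      rw [← hθw i, ← hθw j]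
      ring
  -- the numerator of the Rayleigh quotient at u0
  have hnum : ∑ i, ∑ j, Smat i j * u0 j * u0 i
      = ∑ i, ∑ j, cov π i j * (w i * w j) := by
    apply Finset.sum_congr rfl
    intro i _
    apply Finset.sum_congr rfl
    intro j _
    by_cases hvi : ve i = 0
    · have hwi : w i = 0 := by rw [hw]; simp [hvi]
      have hui : u0 i = 0 := by rw [hu0]; simp [hwi]
      simp [hui, hwi]
    · by_cases hvj : ve j = 0
      · have hwj : w j = 0 := by rw [hw]; simp [hvj]
        have huj : u0 j = 0 := by rw [hu0]; simp [hwj]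
        simp [huj, hwj]
      · have hgi : 0 < margin μ i ∧ margin μ i < 1 := by
          by_contra h; exact hvi (hsupp i h)
        have hgj : 0 < margin μ j ∧ margin μ j < 1 := by
          by_contra h; exact hvj (hsupp j h)
        have hgpi := hgood_pi i hgi
        have hsnej : sf j ≠ 0 := ne_of_gt (hs_pos j)
        have e : Smat i j * u0 j * u0 i = (sf i ^ 2 * corMatrix π i j) * (w i * w j) := by
          rw [hSapp, hu0]
          simp only
          field_simp
        rw [e, hs_sq i hgpi, margin_mul_corMatrix hgpi j]
  -- denominator bounds
  have hden_le : ∑ i, u0 i ^ 2 ≤ M * N := by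
    rw [hN, Finset.mul_sum]
    apply Finset.sum_le_sum
    intro i _
    by_cases hvi : ve i = 0
    · have hwi : w i = 0 := by rw [hw]; simp [hvi]
      have hui : u0 i = 0 := by rw [hu0]; simp [hwi]
      rw [hui]
      have : 0 ≤ margin μ i * ve i ^ 2 := mul_nonneg (margin_nonneg hμ0 i) (sq_nonneg _)
      nlinarith
    · have hgi : 0 < margin μ i ∧ margin μ i < 1 := by
        by_contra h; exact hvi (hsupp i h)
      have hgpi := hgood_pi i hgi
      have hθi : θ i ≠ 0 := ne_of_gt (hθ i).1
      have e : u0 i ^ 2 = (θ i)⁻¹ * (margin μ i * ve i ^ 2) := by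
        rw [hu0]
        simp only
        rw [mul_pow, hs_sq i hgpi, hπdef, margin_downDist, hw]
        simp only
        field_simp
      rw [e]
      exact mul_le_mul_of_nonneg_right (hM_ge i)
        (mul_nonneg (margin_nonneg hμ0 i) (sq_nonneg _))
  have hden_pos : 0 < ∑ i, u0 i ^ 2 := by
    apply Finset.sum_pos' (fun i _ => sq_nonneg _)
    refine ⟨i1, Finset.mem_univ i1, ?_⟩
    have hwi : w i1 ≠ 0 := by
      rw [hw]
      simp only
      exact div_ne_zero hi1 (ne_of_gt (hθ i1).1)
    have hui : u0 i1 ≠ 0 := by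
      rw [hu0]
      exact mul_ne_zero (ne_of_gt (hs_pos i1)) hwi
    positivity
  have hu0_ne : u0 ≠ 0 := by
    intro h
    have := congrFun h i1
    rw [hu0] at this
    simp only at this
    have hwi : w i1 ≠ 0 := by
      rw [hw]
      simp only
      exact div_ne_zero hi1 (ne_of_gt (hθ i1).1)
    exact (mul_ne_zero (ne_of_gt (hs_pos i1)) hwi) this
  have hr := hray u0 hu0_ne
  -- numerator is at least a * N
  have hnum_ge : a * N ≤ ∑ i, ∑ j, Smat i j * u0 j * u0 i := by
    rw [hnum, haN]
    apply Finset.sum_le_sum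
    intro i _
    apply Finset.sum_le_sum
    intro j _
    exact covcomp i j
  -- conclude
  have haN_pos : 0 < a * N := mul_pos ha_pos hN_pos
  have hb_pos : 0 < b := by
    have h4 : 0 < (∑ i, ∑ j, Smat i j * u0 j * u0 i) / (∑ i, u0 i ^ 2) :=
      div_pos (lt_of_lt_of_le haN_pos hnum_ge) hden_pos
    linarith
  have key : a * N ≤ (b * M) * N := by
    have e1 : (∑ i, ∑ j, Smat i j * u0 j * u0 i)
        = ((∑ i, ∑ j, Smat i j * u0 j * u0 i) / (∑ i, u0 i ^ 2)) * (∑ i, u0 i ^ 2) := by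
      rw [div_mul_cancel₀ _ (ne_of_gt hden_pos)]
    calc a * N ≤ ∑ i, ∑ j, Smat i j * u0 j * u0 i := hnum_ge
      _ = ((∑ i, ∑ j, Smat i j * u0 j * u0 i) / (∑ i, u0 i ^ 2)) * (∑ i, u0 i ^ 2) := e1
      _ ≤ b * (∑ i, u0 i ^ 2) := mul_le_mul_of_nonneg_right hr (le_of_lt hden_pos)
      _ ≤ b * (M * N) := mul_le_mul_of_nonneg_left hden_le (le_of_lt hb_pos)
      _ = (b * M) * N := by ring
  exact le_of_mul_le_mul_right key hN_pos
end

section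
/- Let α ≥ 1 and θ ∈ (0,1), and let E : [0,θ] → ℝ be twice differentiable with E' ≤ 0 on [0,θ], satisfying (1−t)·E''(t) ≤ (α−1)·(−E'(t)) for all t ∈ [0,θ]. Then the function t ↦ −E'(t)/(1−t)^{α−1} is nondecreasing on [0,θ], and consequently E(0) − E(θ) ≥ ((1 − (1−θ)^α)/α) · (−E'(0)). -/
open Set Real

/-- Differential inequality lemma: if `α ≥ 1`, `θ ∈ (0,1)`, `E` has first and
second derivatives `E'`, `E''` on `[0,θ]` with `E' ≤ 0` and
`(1−t) E''(t) ≤ (α−1)(−E'(t))` there, then `t ↦ −E'(t)/(1−t)^{α−1}` is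
nondecreasing on `[0,θ]` and
`E(0) − E(θ) ≥ ((1 − (1−θ)^α)/α) (−E'(0))`. -/
theorem stmt_16 (α θ : ℝ) (hα : 1 ≤ α) (hθ0 : 0 < θ) (hθ1 : θ < 1)
    (E E' E'' : ℝ → ℝ)
    (hE' : ∀ t ∈ Icc (0 : ℝ) θ, HasDerivAt E (E' t) t)
    (hE'' : ∀ t ∈ Icc (0 : ℝ) θ, HasDerivAt E' (E'' t) t)
    (hneg : ∀ t ∈ Icc (0 : ℝ) θ, E' t ≤ 0)
    (hineq : ∀ t ∈ Icc (0 : ℝ) θ, (1 - t) * E'' t ≤ (α - 1) * (-E' t)) :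
    MonotoneOn (fun t => -E' t / (1 - t) ^ (α - 1)) (Icc (0 : ℝ) θ) ∧
      ((1 - (1 - θ) ^ α) / α) * (-E' 0) ≤ E 0 - E θ := by
  have hα0 : (0:ℝ) < α := lt_of_lt_of_le one_pos hα
  have hpos : ∀ t ∈ Icc (0:ℝ) θ, (0:ℝ) < 1 - t := by
    intro t ht
    have := ht.2; linarith
  set g : ℝ → ℝ := fun t => -E' t * (1 - t) ^ (1 - α) with hgdef
  have hgderiv : ∀ t ∈ Icc (0:ℝ) θ,
      HasDerivAt g ((1 - t) ^ (-α) * ((1 - t) * (-E'' t) + (α - 1) * (-E' t))) t := by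
    intro t ht
    have h1t := hpos t ht
    have h1 : HasDerivAt (fun t : ℝ => (1 - t)) (-1) t := by
      simpa using (hasDerivAt_id t).const_sub 1
    have h2 : HasDerivAt (fun t : ℝ => (1 - t) ^ (1 - α))
        ((1 - α) * (1 - t) ^ (1 - α - 1) * (-1)) t :=
      (Real.hasDerivAt_rpow_const (p := 1 - α) (Or.inl h1t.ne')).comp t h1
    have h3 : HasDerivAt (fun t => -E' t) (-E'' t) t := (hE'' t ht).neg
    have h4 := h3.mul h2
    refine h4.congr_deriv ?_
    have e1 : (1 - t) ^ (1 - α - 1) = (1 - t) ^ (-α) := by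
      rw [show (1 - α - 1) = -α by ring]
    have e2 : (1 - t) ^ (1 - α) = (1 - t) * (1 - t) ^ (-α) := by
      rw [show (1 - α) = 1 + -α by ring, Real.rpow_add h1t, Real.rpow_one]
    rw [e1, e2]; ring
  have hgmono : MonotoneOn g (Icc 0 θ) := by
    apply monotoneOn_of_deriv_nonneg (convex_Icc 0 θ)
    · exact fun t ht => (hgderiv t ht).continuousAt.continuousWithinAt
    · intro t ht
      rw [interior_Icc] at ht
      exact (hgderiv t (Ioo_subset_Icc_self ht)).differentiableAt.differentiableWithinAt
    · intro t ht
      rw [interior_Icc] at ht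
      have ht' := Ioo_subset_Icc_self ht
      rw [(hgderiv t ht').deriv]
      have h1t := hpos t ht'
      have hq : 0 ≤ (1 - t) * (-E'' t) + (α - 1) * (-E' t) := by
        have := hineq t ht'; nlinarith
      exact mul_nonneg (Real.rpow_nonneg h1t.le _) hq
  have heq : ∀ t ∈ Icc (0:ℝ) θ, -E' t / (1 - t) ^ (α - 1) = g t := by
    intro t ht
    rw [div_eq_mul_inv, ← Real.rpow_neg (hpos t ht).le, show -(α - 1) = 1 - α by ring]
  have hmono : MonotoneOn (fun t => -E' t / (1 - t) ^ (α - 1)) (Icc (0 : ℝ) θ) := by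
    intro a ha b hb hab
    simp only [heq a ha, heq b hb]
    exact hgmono ha hb hab
  refine ⟨hmono, ?_⟩
  -- key pointwise bound: E' t ≤ E' 0 * (1-t)^(α-1)
  have h0mem : (0:ℝ) ∈ Icc (0:ℝ) θ := ⟨le_refl 0, hθ0.le⟩
  have hkey : ∀ t ∈ Icc (0:ℝ) θ, E' t ≤ E' 0 * (1 - t) ^ (α - 1) := by
    intro t ht
    have h1t := hpos t ht
    have hg0 : g 0 ≤ g t := hgmono h0mem ht ht.1
    have hg0' : -E' 0 ≤ -E' t * (1 - t) ^ (1 - α) := by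
      simpa [hgdef, Real.one_rpow] using hg0
    have hmul := mul_le_mul_of_nonneg_right hg0' (Real.rpow_nonneg h1t.le (α - 1))
    have hc : (1 - t) ^ (1 - α) * (1 - t) ^ (α - 1) = 1 := by
      rw [← Real.rpow_add h1t, show (1 - α) + (α - 1) = 0 by ring, Real.rpow_zero]
    rw [mul_assoc, hc, mul_one] at hmul
    linarith
  set F : ℝ → ℝ := fun t => E t + E' 0 * (1 - t) ^ α / α with hFdef
  have hFderiv : ∀ t ∈ Icc (0:ℝ) θ,
      HasDerivAt F (E' t - E' 0 * (1 - t) ^ (α - 1)) t := by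
    intro t ht
    have h1t := hpos t ht
    have h1 : HasDerivAt (fun t : ℝ => (1 - t)) (-1) t := by
      simpa using (hasDerivAt_id t).const_sub 1
    have h2 : HasDerivAt (fun t : ℝ => (1 - t) ^ α)
        (α * (1 - t) ^ (α - 1) * (-1)) t :=
      (Real.hasDerivAt_rpow_const (p := α) (Or.inl h1t.ne')).comp t h1
    have h3 := ((h2.const_mul (E' 0)).div_const α)
    have h4 := (hE' t ht).add h3
    refine h4.congr_deriv ?_
    field_simp
    ring
  have hFanti : AntitoneOn F (Icc 0 θ) := by
    apply antitoneOn_of_deriv_nonpos (convex_Icc 0 θ)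
    · exact fun t ht => (hFderiv t ht).continuousAt.continuousWithinAt
    · intro t ht
      rw [interior_Icc] at ht
      exact (hFderiv t (Ioo_subset_Icc_self ht)).differentiableAt.differentiableWithinAt
    · intro t ht
      rw [interior_Icc] at ht
      have ht' := Ioo_subset_Icc_self ht
      rw [(hFderiv t ht').deriv]
      have := hkey t ht'
      linarith
  have hFle : F θ ≤ F 0 := hFanti h0mem ⟨hθ0.le, le_refl θ⟩ hθ0.le
  have hF0 : F 0 = E 0 + E' 0 / α := by
    simp [hFdef, Real.one_rpow]
  have hFθ : F θ = E θ + E' 0 * (1 - θ) ^ α / α := rfl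
  rw [hF0, hFθ] at hFle
  have hring : ((1 - (1 - θ) ^ α) / α) * (-E' 0)
      = E' 0 * (1 - θ) ^ α / α - E' 0 / α := by
    field_simp
    ring
  linarith [hring, hFle]
end

section
/- Let β, γ ≥ 0 with 0 < βγ < 1, let d ≥ 2 be an integer, and suppose (β, γ, λ) is critically d-unique, i.e., the unique positive fixed point x̂ of f_d(x) = λ((βx+1)/(x+γ))^d satisfies d(1−βγ)x̂/((βx̂+1)(x̂+γ)) = 1. Then for every θ with 1 ≤ θ ≤ 1/√(βγ), the tilted parameters (θβ, θγ, λ) are d-unique with slack at least (θ−1)√(βγ)/(1−√(βγ)); i.e., the unique positive fixed point x̂_θ of x ↦ λ((θβx+1)/(x+θγ))^d satisfies d(1−θ²βγ)x̂_θ/((θβx̂_θ+1)(x̂_θ+θγ)) ≤ 1 − (θ−1)√(βγ)/(1−√(βγ)). -/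
set_option maxHeartbeats 1600000


open Real

/-- Edge-tilting preserves uniqueness with slack: if `(β, γ, λ)` is critically
`d`-unique, i.e. its unique positive fixed point `xhat` of
`f_d(x) = λ((βx+1)/(x+γ))^d` satisfies `d(1−βγ)xhat/((βxhat+1)(xhat+γ)) = 1`, then
for every `θ ∈ [1, 1/√(βγ)]` the tilted parameters `(θβ, θγ, λ)` are
`d`-unique with slack at least `(θ−1)√(βγ)/(1−√(βγ))`: the unique positive
fixed point `xhat_θ` of `x ↦ λ((θβx+1)/(x+θγ))^d` satisfies
`d(1−θ²βγ) xhat_θ/((θβ xhat_θ+1)(xhat_θ+θγ)) ≤ 1 − (θ−1)√(βγ)/(1−√(βγ))`. -/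
theorem stmt_19 (β γ lam : ℝ) (d : ℕ)
    (hβ : 0 ≤ β) (hγ : 0 ≤ γ) (hpos : 0 < β * γ) (hanti : β * γ < 1)
    (hlam : 0 < lam) (hd : 2 ≤ d)
    (xhat : ℝ) (hxhat : 0 < xhat)
    (hfix : xhat = lam * ((β * xhat + 1) / (xhat + γ)) ^ d)
    (hcrit : (d : ℝ) * (1 - β * γ) * xhat / ((β * xhat + 1) * (xhat + γ)) = 1) :
    ∀ θ : ℝ, 1 ≤ θ → θ ≤ 1 / Real.sqrt (β * γ) →
      ∀ xhatθ : ℝ, 0 < xhatθ →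
        xhatθ = lam * ((θ * β * xhatθ + 1) / (xhatθ + θ * γ)) ^ d →
        (d : ℝ) * (1 - θ ^ 2 * β * γ) * xhatθ /
            ((θ * β * xhatθ + 1) * (xhatθ + θ * γ)) ≤
          1 - (θ - 1) * Real.sqrt (β * γ) / (1 - Real.sqrt (β * γ)) := by
  intro θ hθ1 hθ2 xθ hxθ hfixθ
  have hβ0 : 0 < β := by
    rcases hβ.lt_or_eq with h | h
    · exact h
    · exfalso; rw [← h] at hpos; simp at hpos
  have hγ0 : 0 < γ := by
    rcases hγ.lt_or_eq with h | h
    · exact h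
    · exfalso; rw [← h] at hpos; simp at hpos
  rw [Real.sqrt_mul hβ] at hθ2 ⊢
  set s := Real.sqrt β * Real.sqrt γ with hs_def
  set r := Real.sqrt γ / Real.sqrt β with hr_def
  have hsa : 0 < Real.sqrt β := Real.sqrt_pos.mpr hβ0
  have hsb : 0 < Real.sqrt γ := Real.sqrt_pos.mpr hγ0
  have hs0 : 0 < s := mul_pos hsa hsb
  have hs2 : s ^ 2 = β * γ := by
    rw [hs_def, mul_pow, Real.sq_sqrt hβ, Real.sq_sqrt hγ]
  have hs1 : s < 1 := by nlinarith only [hs0, hs2, hanti]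
  have hr0 : 0 < r := div_pos hsb hsa
  have hβr : β * r = s := by
    rw [hr_def, hs_def, ← mul_div_assoc, div_eq_iff hsa.ne']
    linear_combination (-(Real.sqrt γ)) * Real.sq_sqrt hβ
  have hγe : s * r = γ := by
    rw [hr_def, hs_def, ← mul_div_assoc, div_eq_iff hsa.ne']
    linear_combination (Real.sqrt β) * Real.sq_sqrt hγ
  have hθ0 : 0 < θ := by linarith
  set t := θ * s with ht_def
  have ht0 : 0 < t := mul_pos hθ0 hs0
  have hts : s ≤ t := by
    rw [ht_def]
    nlinarith only [hθ1, hs0]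
  have ht1 : t ≤ 1 := by
    rw [ht_def]
    calc θ * s ≤ (1 / s) * s := mul_le_mul_of_nonneg_right hθ2 hs0.le
    _ = 1 := by field_simp
  -- positivity facts
  have hden1 : 0 < θ * β * xθ + 1 := by
    nlinarith only [mul_nonneg (mul_nonneg hθ0.le hβ) hxθ.le]
  have hden2 : 0 < xθ + θ * γ := by
    nlinarith only [mul_nonneg hθ0.le hγ, hxθ]
  have hB : 0 < (θ * β * xθ + 1) * (xθ + θ * γ) := mul_pos hden1 hden2
  have hdenc : 0 < (β * xhat + 1) * (xhat + γ) :=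
    mul_pos (by nlinarith only [mul_nonneg hβ hxhat.le])
      (by nlinarith only [hxhat, hγ])
  have hP1 : 0 < s * xhat + r := by nlinarith only [mul_pos hs0 hxhat, hr0]
  have hP2 : 0 < xhat + s * r := by nlinarith only [mul_pos hs0 hr0, hxhat]
  have hP3 : 0 < t * xθ + r := by nlinarith only [mul_pos ht0 hxθ, hr0]
  have hP3' : 0 < t * xhat + r := by nlinarith only [mul_pos ht0 hxhat, hr0]
  have hP4 : 0 < xθ + t * r := by nlinarith only [mul_pos ht0 hr0, hxθ]
  -- criticality in symmetrized form
  rw [div_eq_one_iff_eq hdenc.ne'] at hcrit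
  have crit'' : (d : ℝ) * (1 - s ^ 2) * (r * xhat) = (s * xhat + r) * (xhat + s * r) := by
    linear_combination r * hcrit - ((d : ℝ) * r * xhat) * hs2
      + (xhat * (xhat + s * r)) * hβr - (β * r * xhat + r) * hγe
  -- fixed point equations, cleared of denominators
  have hxγ : xhat + γ ≠ 0 := by positivity
  have hxθγ : xθ + θ * γ ≠ 0 := hden2.ne'
  have e1 : xhat * (xhat + γ) ^ d = lam * (β * xhat + 1) ^ d := by
    calc xhat * (xhat + γ) ^ d
        = (lam * ((β * xhat + 1) ^ d / (xhat + γ) ^ d)) * (xhat + γ) ^ d := by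
          rw [← div_pow, ← hfix]
    _ = lam * (β * xhat + 1) ^ d := by field_simp
  have e2 : xθ * (xθ + θ * γ) ^ d = lam * (θ * β * xθ + 1) ^ d := by
    calc xθ * (xθ + θ * γ) ^ d
        = (lam * ((θ * β * xθ + 1) ^ d / (xθ + θ * γ) ^ d)) * (xθ + θ * γ) ^ d := by
          rw [← div_pow, ← hfixθ]
    _ = lam * (θ * β * xθ + 1) ^ d := by field_simp
  have h₁ : xhat + γ = xhat + s * r := by rw [hγe]
  have h₂ : s * xhat + r = r * (β * xhat + 1) := by linear_combination (-xhat) * hβr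
  have e1' : xhat * (xhat + s * r) ^ d * r ^ d = lam * (s * xhat + r) ^ d := by
    rw [h₂, mul_pow, ← h₁]
    linear_combination (r ^ d) * e1
  have h₃ : xθ + θ * γ = xθ + t * r := by rw [ht_def]; linear_combination (-θ) * hγe
  have h₄ : t * xθ + r = r * (θ * β * xθ + 1) := by
    rw [ht_def]; linear_combination (-(θ * xθ)) * hβr
  have e2' : xθ * (xθ + t * r) ^ d * r ^ d = lam * (t * xθ + r) ^ d := by
    rw [h₄, mul_pow, ← h₃]
    linear_combination (r ^ d) * e2
  -- the combined key relation
  have hlr : lam * r ^ d ≠ 0 := by positivity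
  have hk2 : lam * r ^ d * (xhat * (xhat + s * r) ^ d * (t * xθ + r) ^ d)
      = lam * r ^ d * (xθ * (xθ + t * r) ^ d * (s * xhat + r) ^ d) := by
    linear_combination (lam * (t * xθ + r) ^ d) * e1' - (lam * (s * xhat + r) ^ d) * e2'
  have hkey := mul_left_cancel₀ hlr hk2
  have eqg : xθ * ((xθ + t * r) / (t * xθ + r)) ^ d
      = xhat * ((xhat + s * r) / (s * xhat + r)) ^ d := by
    have eqg' : xθ * (xθ + t * r) ^ d * (s * xhat + r) ^ d
        = xhat * (xhat + s * r) ^ d * (t * xθ + r) ^ d := by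
      linear_combination (-1 : ℝ) * hkey
    rw [div_pow, div_pow]
    field_simp
    linear_combination eqg'
  -- the comparison of fixed points
  have hSθ : 0 ≤ (xθ - xhat) * (xθ * xhat - r ^ 2) := by
    rcases le_total r xhat with hcase | hcase
    · have hxle : xhat ≤ xθ := by
        by_contra hcon
        push_neg at hcon
        have q1 : (xθ + t * r) / (t * xθ + r) ≤ (xhat + t * r) / (t * xhat + r) := by
          rw [div_le_div_iff₀ hP3 hP3']
          nlinarith only [mul_nonneg (mul_nonneg hr0.le
            (by nlinarith only [ht0, ht1] : (0:ℝ) ≤ 1 - t ^ 2))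
            (by linarith : (0:ℝ) ≤ xhat - xθ)]
        have q2 : (xhat + t * r) / (t * xhat + r) ≤ (xhat + s * r) / (s * xhat + r) := by
          rw [div_le_div_iff₀ hP3' hP1]
          nlinarith only [mul_nonneg (by linarith : (0:ℝ) ≤ t - s)
            (by nlinarith only [hcase, hr0] : (0:ℝ) ≤ xhat ^ 2 - r ^ 2)]
        have p1 := pow_le_pow_left₀ (by positivity) q1 d
        have p2 := pow_le_pow_left₀ (by positivity) q2 d
        have hlt1 : xθ * ((xθ + t * r) / (t * xθ + r)) ^ d
            < xhat * ((xhat + t * r) / (t * xhat + r)) ^ d := by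
          calc xθ * ((xθ + t * r) / (t * xθ + r)) ^ d
              ≤ xθ * ((xhat + t * r) / (t * xhat + r)) ^ d :=
                mul_le_mul_of_nonneg_left p1 hxθ.le
          _ < xhat * ((xhat + t * r) / (t * xhat + r)) ^ d := by
                apply mul_lt_mul_of_pos_right hcon
                positivity
        have hle2 : xhat * ((xhat + t * r) / (t * xhat + r)) ^ d
            ≤ xhat * ((xhat + s * r) / (s * xhat + r)) ^ d :=
          mul_le_mul_of_nonneg_left p2 hxhat.le
        linarith only [eqg, hlt1, hle2]
      have h1 : r * r ≤ xθ * xhat :=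
        mul_le_mul (hcase.trans hxle) hcase hr0.le hxθ.le
      exact mul_nonneg (by linarith) (by nlinarith only [h1])
    · have hxle : xθ ≤ xhat := by
        by_contra hcon
        push_neg at hcon
        have q1 : (xhat + t * r) / (t * xhat + r) ≤ (xθ + t * r) / (t * xθ + r) := by
          rw [div_le_div_iff₀ hP3' hP3]
          nlinarith only [mul_nonneg (mul_nonneg hr0.le
            (by nlinarith only [ht0, ht1] : (0:ℝ) ≤ 1 - t ^ 2))
            (by linarith : (0:ℝ) ≤ xθ - xhat)]
        have q2 : (xhat + s * r) / (s * xhat + r) ≤ (xhat + t * r) / (t * xhat + r) := by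
          rw [div_le_div_iff₀ hP1 hP3']
          nlinarith only [mul_nonneg (by linarith : (0:ℝ) ≤ t - s)
            (by nlinarith only [hcase, hxhat] : (0:ℝ) ≤ r ^ 2 - xhat ^ 2)]
        have p1 := pow_le_pow_left₀ (by positivity) q1 d
        have p2 := pow_le_pow_left₀ (by positivity) q2 d
        have hlt1 : xhat * ((xhat + t * r) / (t * xhat + r)) ^ d
            < xθ * ((xθ + t * r) / (t * xθ + r)) ^ d := by
          calc xhat * ((xhat + t * r) / (t * xhat + r)) ^ d
              < xθ * ((xhat + t * r) / (t * xhat + r)) ^ d := by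
                apply mul_lt_mul_of_pos_right hcon
                positivity
          _ ≤ xθ * ((xθ + t * r) / (t * xθ + r)) ^ d :=
                mul_le_mul_of_nonneg_left p1 hxθ.le
        have hle2 : xhat * ((xhat + s * r) / (s * xhat + r)) ^ d
            ≤ xhat * ((xhat + t * r) / (t * xhat + r)) ^ d :=
          mul_le_mul_of_nonneg_left p2 hxhat.le
        linarith only [eqg, hlt1, hle2]
      have h1 : xθ * xhat ≤ r * r :=
        mul_le_mul (hxle.trans hcase) hcase hxhat.le hr0.le
      nlinarith only [mul_nonneg (by linarith : (0:ℝ) ≤ xhat - xθ)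
        (by nlinarith only [h1] : (0:ℝ) ≤ r ^ 2 - xθ * xhat)]
  -- slack bound at criticality
  have hd1s : 1 + s ≤ (d : ℝ) * (1 - s) := by
    nlinarith only [crit'', mul_nonneg hs0.le (sq_nonneg (xhat - r)),
      mul_pos (mul_pos (show (0:ℝ) < 1 + s by linarith) hr0) hxhat, hs1, hs0]
  have h7 : 0 ≤ (d : ℝ) * (1 - s) - (1 - s * t) := by
    nlinarith only [hd1s, mul_nonneg hs0.le ht0.le, hs0]
  have h8 : 0 ≤ (t - s) * ((d : ℝ) * (1 - s) - (1 - s * t)) :=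
    mul_nonneg (by linarith) h7
  have key : s ^ 2 * r * xhat * ((t * xθ + r) * (xθ + t * r)
      - (d : ℝ) * (1 + t) * (1 - s) * (r * xθ))
      = t * s ^ 2 * r * ((xθ - xhat) * (xθ * xhat - r ^ 2))
        + s * r ^ 2 * xhat * xθ * ((t - s) * ((d : ℝ) * (1 - s) - (1 - s * t))) := by
    linear_combination (-(t * s * r * xθ)) * crit''
  have hmain : (d : ℝ) * (1 + t) * (1 - s) * (r * xθ) ≤ (t * xθ + r) * (xθ + t * r) := by
    have hpos2 : (0:ℝ) < s ^ 2 * r * xhat :=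
      mul_pos (mul_pos (pow_pos hs0 2) hr0) hxhat
    have hG0 : 0 ≤ s ^ 2 * r * xhat * ((t * xθ + r) * (xθ + t * r)
        - (d : ℝ) * (1 + t) * (1 - s) * (r * xθ)) := by
      rw [key]
      exact add_nonneg (mul_nonneg (by positivity) hSθ) (mul_nonneg (by positivity) h8)
    nlinarith only [hG0, hpos2, mul_pos hpos2 hpos2]
  -- assemble the final inequality
  have hts2 : θ ^ 2 * β * γ = t ^ 2 := by
    rw [ht_def]; linear_combination (-(θ ^ 2)) * hs2
  have hBr : r * ((θ * β * xθ + 1) * (xθ + θ * γ)) = (t * xθ + r) * (xθ + t * r) := by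
    rw [h₄, ← h₃]; ring
  have h1s : 0 < 1 - s := by linarith
  rw [div_le_iff₀ hB]
  have hR : 1 - (θ - 1) * s / (1 - s) = (1 - t) / (1 - s) := by
    rw [ht_def]; field_simp; ring
  rw [hR, div_mul_eq_mul_div, le_div_iff₀ h1s]
  have h2 := mul_le_mul_of_nonneg_left hmain (by linarith : (0:ℝ) ≤ 1 - t)
  rw [← mul_le_mul_iff_of_pos_right hr0]
  calc (d : ℝ) * (1 - θ ^ 2 * β * γ) * xθ * (1 - s) * r
      = (1 - t) * ((d : ℝ) * (1 + t) * (1 - s) * (r * xθ)) := by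
        linear_combination (-((d : ℝ) * xθ * (1 - s) * r)) * hts2
  _ ≤ (1 - t) * ((t * xθ + r) * (xθ + t * r)) := h2
  _ = (1 - t) * ((θ * β * xθ + 1) * (xθ + θ * γ)) * r := by
        linear_combination (t - 1) * hBr
end
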